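/- For positive integers m ≤ n, ∑_{k=1}^{m} (n−k)!/((m−k)! k) = (n!/m!)·(ψ₀(n+1) − ψ₀(n−m+1)), where ψ₀ is the digamma function. -/

import Mathlib

open Finset

/-- The `m`-th polygamma function: the `(m+1)`-th derivative of `log ∘ Γ`. -/
noncomputable def psi (m : ℕ) (x : ℝ) : ℝ :=
  iteratedDeriv (m + 1) (fun y => Real.log (Real.Gamma y)) x

lemma logGamma_diff {x : ℝ} (hx : 0 < x) :
    DifferentiableAt ℝ (fun y => Real.log (Real.Gamma y)) x := by
  have h1 : DifferentiableAt ℝ Real.Gamma x :=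
    Real.differentiableAt_Gamma (fun m => by
      have : -(m : ℝ) < x := lt_of_le_of_lt (neg_nonpos.mpr (Nat.cast_nonneg m)) hx
      exact ne_of_gt this)
  exact h1.log (Real.Gamma_pos_of_pos hx).ne'

lemma psi0_add_one {x : ℝ} (hx : 0 < x) : psi 0 (x + 1) = psi 0 x + 1 / x := by
  have hev : (fun y => Real.log (Real.Gamma (y + 1)))
      =ᶠ[nhds x] fun y => Real.log y + Real.log (Real.Gamma y) := by
    filter_upwards [IsOpen.mem_nhds isOpen_Ioi hx] with y hy
    rw [Real.Gamma_add_one (ne_of_gt hy),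
      Real.log_mul (ne_of_gt hy) (Real.Gamma_pos_of_pos hy).ne']
  have h1 : deriv (fun y => Real.log (Real.Gamma (y + 1))) x
      = deriv (fun y => Real.log (Real.Gamma y)) (x + 1) :=
    deriv_comp_add_const (fun y => Real.log (Real.Gamma y)) 1 x
  have h2 : deriv (fun y => Real.log y + Real.log (Real.Gamma y)) x
      = 1 / x + deriv (fun y => Real.log (Real.Gamma y)) x := by
    rw [deriv_fun_add (Real.differentiableAt_log hx.ne') (logGamma_diff hx), Real.deriv_log,
      one_div]
  have h3 := hev.deriv_eq
  simp only [psi, Nat.zero_add, iteratedDeriv_one]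
  rw [← h1, h3, h2]; ring

lemma psi0_add_nat {x : ℝ} (hx : 0 < x) (k : ℕ) :
    psi 0 (x + k) = psi 0 x + ∑ i ∈ range k, 1 / (x + i) := by
  induction k with
  | zero => simp
  | succ k ih =>
    have hxk : 0 < x + k := by positivity
    have h : x + (k + 1 : ℕ) = (x + k) + 1 := by push_cast; ring
    rw [h, psi0_add_one hxk, ih, Finset.sum_range_succ]
    push_cast
    ring

lemma tele (d m : ℕ) :
    ∑ i ∈ range m, (d : ℝ) * (Nat.factorial (d + i) : ℝ) / (Nat.factorial (i + 1) : ℝ)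
      = (Nat.factorial (m + d) : ℝ) / (Nat.factorial m : ℝ) - (Nat.factorial d : ℝ) := by
  have h := Finset.sum_range_sub
    (fun i => (Nat.factorial (d + i) : ℝ) / (Nat.factorial i : ℝ)) m
  have heq : ∀ i ∈ range m,
      (d : ℝ) * (Nat.factorial (d + i) : ℝ) / (Nat.factorial (i + 1) : ℝ)
      = (Nat.factorial (d + (i + 1)) : ℝ) / (Nat.factorial (i + 1) : ℝ)
        - (Nat.factorial (d + i) : ℝ) / (Nat.factorial i : ℝ) := by
    intro i _
    have h1 : d + (i + 1) = (d + i) + 1 := by omega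
    rw [h1, Nat.factorial_succ (d + i), Nat.factorial_succ i]
    have hfi : (Nat.factorial i : ℝ) ≠ 0 := by positivity
    have hi1 : ((i : ℝ) + 1) ≠ 0 := by positivity
    push_cast
    field_simp
    ring
  rw [Finset.sum_congr rfl heq, h]
  have h2 : d + m = m + d := by omega
  rw [h2]
  simp

lemma key (d m : ℕ) :
    ∑ i ∈ range m, ((Nat.factorial (d + i) : ℝ) / (Nat.factorial i : ℝ)) / ((m - i : ℕ) : ℝ)
      = ((Nat.factorial (m + d) : ℝ) / (Nat.factorial m : ℝ)) *
        ∑ i ∈ range m, 1 / ((d : ℝ) + 1 + (i : ℝ)) := by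
  induction m with
  | zero => simp
  | succ m ih =>
    have hm1 : ((m : ℝ) + 1) ≠ 0 := by positivity
    have hB : (Nat.factorial m : ℝ) ≠ 0 := by positivity
    have heq : ∀ i ∈ range m,
        ((Nat.factorial (d + (i + 1)) : ℝ) / (Nat.factorial (i + 1) : ℝ)) /
          ((m + 1 - (i + 1) : ℕ) : ℝ)
        = (((m : ℝ) + 1 + (d : ℝ)) / ((m : ℝ) + 1)) *
            (((Nat.factorial (d + i) : ℝ) / (Nat.factorial i : ℝ)) / ((m - i : ℕ) : ℝ))
          + ((d : ℝ) / ((m : ℝ) + 1)) *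
            ((Nat.factorial (d + i) : ℝ) / (Nat.factorial (i + 1) : ℝ)) := by
      intro i hi
      have him : i < m := Finset.mem_range.mp hi
      obtain ⟨k, hk1, hk2⟩ : ∃ k, m = i + k ∧ 1 ≤ k := ⟨m - i, by omega, by omega⟩
      subst hk1
      have e1 : (i + k + 1 - (i + 1) : ℕ) = k := by omega
      have e2 : (i + k - i : ℕ) = k := by omega
      have e3 : d + (i + 1) = (d + i) + 1 := by omega
      rw [e1, e2, e3, Nat.factorial_succ (d + i), Nat.factorial_succ i]
      have hfi : (Nat.factorial i : ℝ) ≠ 0 := by positivity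
      have hfdi : (Nat.factorial (d + i) : ℝ) ≠ 0 := by positivity
      have hkR : (k : ℝ) ≠ 0 := by
        have : (0 : ℝ) < k := by exact_mod_cast hk2
        exact this.ne'
      have hik1 : ((i : ℝ) + (k : ℝ) + 1) ≠ 0 := by positivity
      have hi1 : ((i : ℝ) + 1) ≠ 0 := by positivity
      push_cast
      field_simp
      ring
    have hS : ((d : ℝ) / ((m : ℝ) + 1)) *
        ∑ i ∈ range m, (Nat.factorial (d + i) : ℝ) / (Nat.factorial (i + 1) : ℝ)
        = ((Nat.factorial (m + d) : ℝ) / (Nat.factorial m : ℝ) - (Nat.factorial d : ℝ)) /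
          ((m : ℝ) + 1) := by
      rw [div_mul_eq_mul_div, Finset.mul_sum,
        Finset.sum_congr rfl (fun i _ => (mul_div_assoc (d : ℝ) _ _).symm), tele d m]
    rw [Finset.sum_range_succ', Finset.sum_range_succ,
      Finset.sum_congr rfl heq, Finset.sum_add_distrib, ← Finset.mul_sum, ← Finset.mul_sum,
      ih, hS]
    have e4 : m + 1 + d = (m + d) + 1 := by omega
    rw [e4, Nat.factorial_succ (m + d), Nat.factorial_succ m]
    have hA : (Nat.factorial (m + d) : ℝ) ≠ 0 := by positivity
    have hdm1 : ((d : ℝ) + 1 + (m : ℝ)) ≠ 0 := by positivity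
    simp only [Nat.add_zero, Nat.sub_zero, Nat.factorial_zero]
    push_cast
    field_simp
    ring

theorem stmt_15 (m n : ℕ) (hm : 0 < m) (hmn : m ≤ n) :
    ∑ k ∈ Icc 1 m, ((Nat.factorial (n - k) : ℝ) / (Nat.factorial (m - k) : ℝ)) / (k : ℝ) =
      ((Nat.factorial n : ℝ) / (Nat.factorial m : ℝ)) * (psi 0 ((n : ℝ) + 1) - psi 0 ((n : ℝ) - m + 1)) := by
  obtain ⟨d, rfl⟩ := Nat.exists_eq_add_of_le hmn
  have hx : (0 : ℝ) < (d : ℝ) + 1 := by positivity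
  have hpsi := psi0_add_nat hx m
  have e1 : ((m + d : ℕ) : ℝ) + 1 = ((d : ℝ) + 1) + (m : ℕ) := by push_cast; ring
  have e2 : ((m + d : ℕ) : ℝ) - (m : ℕ) + 1 = (d : ℝ) + 1 := by push_cast; ring
  rw [e1, e2, hpsi, add_sub_cancel_left]
  have hL : ∑ k ∈ Icc 1 m,
      ((Nat.factorial (m + d - k) : ℝ) / (Nat.factorial (m - k) : ℝ)) / (k : ℝ)
      = ∑ i ∈ range m,
        ((Nat.factorial (d + i) : ℝ) / (Nat.factorial i : ℝ)) / ((m - i : ℕ) : ℝ) := by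
    refine Finset.sum_nbij' (fun k => m - k) (fun i => m - i) ?_ ?_ ?_ ?_ ?_
    · intro k hk; simp only [Finset.mem_Icc] at hk; simp only [Finset.mem_range]; omega
    · intro i hi; simp only [Finset.mem_range] at hi; simp only [Finset.mem_Icc]; omega
    · intro k hk; simp only [Finset.mem_Icc] at hk; show m - (m - k) = k; omega
    · intro i hi; simp only [Finset.mem_range] at hi; show m - (m - i) = i; omega
    · intro k hk; simp only [Finset.mem_Icc] at hk
      have b1 : d + (m - k) = m + d - k := by omega
      have b2 : m - (m - k) = k := by omega
      rw [b1, b2]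
  rw [hL, key d m]
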